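/- A vector x ∈ S^7 forms exactly five distinct dot products with the points of the 2_41 polytope ω̄_2160 if and only if x belongs to the normalized E8 root system ω̄_240; moreover, for each x ∈ ω̄_240 the set of these dot products is D(x, ω̄_2160) = {0, 1/(2√2), -1/(2√2), 1/√2, -1/√2}. -/

import Mathlib

open MeasureTheory Metric
open scoped RealInnerProductSpace

noncomputable section

/-- `E n` is the Euclidean space `ℝ^n`; the unit sphere `S^{n-1}` is `Metric.sphere (0 : E n) 1`. -/
abbrev E (n : ℕ) : Type := EuclideanSpace ℝ (Fin n)

/-- Type I vectors of the `2_41` polytope: `4` zero coordinates and `4` coordinates `±1/2`. -/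
noncomputable def typeI : Finset (E 8) :=
  letI : DecidableEq (E 8) := Classical.decEq _
  ((Finset.univ : Finset (Finset (Fin 8) × (Fin 8 → Bool))).filter fun p => p.1.card = 4).image
    (fun p => (WithLp.toLp 2 fun i => if i ∈ p.1 then (if p.2 i then -(1/2 : ℝ) else 1/2) else 0 : E 8))

/-- Type II vectors of the `2_41` polytope: `7` zero coordinates and one coordinate `±1`. -/
noncomputable def typeII : Finset (E 8) :=
  letI : DecidableEq (E 8) := Classical.decEq _
  (Finset.univ : Finset (Fin 8 × Bool)).image
    (fun p => (WithLp.toLp 2 fun i => if i = p.1 then (if p.2 then -(1 : ℝ) else 1) else 0 : E 8))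

/-- Type III vectors of the `2_41` polytope: `7` coordinates `±1/4`, one coordinate `±3/4`,
with an odd total number of negative coordinates. -/
noncomputable def typeIII : Finset (E 8) :=
  letI : DecidableEq (E 8) := Classical.decEq _
  ((Finset.univ : Finset (Fin 8 × (Fin 8 → Bool))).filter fun p =>
      ¬ Even (Finset.univ.filter fun i => p.2 i = true).card).image
    (fun p => (WithLp.toLp 2 fun i =>
      (if p.2 i then (-1 : ℝ) else 1) * (if i = p.1 then 3/4 else 1/4) : E 8))

/-- The `2_41` polytope on `S^7`: the `2160` vectors of types I, II and III. -/
noncomputable def poly241 : Finset (E 8) :=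
  letI : DecidableEq (E 8) := Classical.decEq _
  typeI ∪ typeII ∪ typeIII

/-- The normalized minimal vectors of the `E_8` lattice on `S^7`: the `112` vectors with `6`
zero coordinates and two coordinates `±1/√2`, together with the `128` vectors with all eight
coordinates `±1/(2√2)` and an even number of minus signs. -/
noncomputable def e8Roots : Finset (E 8) :=
  letI : DecidableEq (E 8) := Classical.decEq _
  (((Finset.univ : Finset (Finset (Fin 8) × (Fin 8 → Bool))).filter fun p => p.1.card = 2).image
    (fun p => (WithLp.toLp 2 fun i => if i ∈ p.1 then
        (if p.2 i then -(1 / Real.sqrt 2) else 1 / Real.sqrt 2) else 0 : E 8)))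
  ∪ (((Finset.univ : Finset (Fin 8 → Bool)).filter fun ε =>
      Even (Finset.univ.filter fun i => ε i = true).card).image
    (fun ε => (WithLp.toLp 2 fun i =>
      if ε i then -(1 / (2 * Real.sqrt 2)) else 1 / (2 * Real.sqrt 2) : E 8)))

section Aux0
open Finset

lemma card_filter_zmod (ε : Fin 8 → Bool) :
    (((univ.filter fun i => ε i = true).card : ZMod 2)) = ∑ i : Fin 8, (if ε i then (1 : ZMod 2) else 0) := by
  rw [Finset.card_filter]
  push_cast
  rfl

lemma parity_mismatch (ε δ : Fin 8 → Bool)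
    (hε : Even (univ.filter fun i => ε i = true).card)
    (hδ : ¬ Even (univ.filter fun i => δ i = true).card) :
    ¬ Even (univ.filter fun i => ¬ ε i = δ i).card := by
  have key : (((univ.filter fun i => ¬ ε i = δ i).card : ZMod 2))
      = ((univ.filter fun i => ε i = true).card : ZMod 2)
        + ((univ.filter fun i => δ i = true).card : ZMod 2) := by
    rw [card_filter_zmod, card_filter_zmod, ← Finset.sum_add_distrib, Finset.card_filter]
    push_cast
    apply Finset.sum_congr rfl
    intro i _
    cases h1 : ε i <;> cases h2 : δ i <;> simp <;> decide
  have e0 : ∀ n : ℕ, Even n ↔ (n : ZMod 2) = 0 := by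
    intro n
    rw [even_iff_two_dvd, ← ZMod.natCast_eq_zero_iff]
  rw [e0] at hε hδ ⊢
  rw [key, hε]
  simp
  intro h
  exact hδ h


lemma five_structure (F : Finset ℝ) (h5 : F.card = 5) (hneg : ∀ t ∈ F, -t ∈ F) :
    ∃ α β : ℝ, 0 < α ∧ α < β ∧ ∀ t ∈ F, t = 0 ∨ t = α ∨ t = -α ∨ t = β ∨ t = -β := by
  classical
  set P := F.filter (fun t => 0 < t) with hP
  set N := F.filter (fun t => t < 0) with hN
  set Z := F.filter (fun t => t = 0) with hZ
  have hPN : P.card = N.card := by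
    apply Finset.card_bij (fun a _ => -a)
    · intro a ha
      rcases Finset.mem_filter.mp ha with ⟨haF, hapos⟩
      exact Finset.mem_filter.mpr ⟨hneg a haF, by linarith⟩
    · intro a ha b hb hab
      linarith [neg_injective hab]
    · intro b hb
      rcases Finset.mem_filter.mp hb with ⟨hbF, hbneg⟩
      exact ⟨-b, Finset.mem_filter.mpr ⟨hneg b hbF, by linarith⟩, by ring⟩
  have hZ1 : Z.card ≤ 1 := by
    apply Finset.card_le_one.mpr
    intro a ha b hb
    rcases Finset.mem_filter.mp ha with ⟨-, ha0⟩
    rcases Finset.mem_filter.mp hb with ⟨-, hb0⟩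
    rw [ha0, hb0]
  have hunion : P ∪ N ∪ Z = F := by
    ext t
    simp only [Finset.mem_union, hP, hN, hZ, Finset.mem_filter]
    constructor
    · rintro ((⟨h, -⟩ | ⟨h, -⟩) | ⟨h, -⟩) <;> exact h
    · intro h
      rcases lt_trichotomy t 0 with h0 | h0 | h0
      · exact Or.inl (Or.inr ⟨h, h0⟩)
      · exact Or.inr ⟨h, h0⟩
      · exact Or.inl (Or.inl ⟨h, h0⟩)
  have hd1 : Disjoint P N := by
    rw [Finset.disjoint_left]
    intro a ha hb
    rcases Finset.mem_filter.mp ha with ⟨-, h1⟩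
    rcases Finset.mem_filter.mp hb with ⟨-, h2⟩
    linarith
  have hd2 : Disjoint (P ∪ N) Z := by
    rw [Finset.disjoint_left]
    intro a ha hb
    rcases Finset.mem_filter.mp hb with ⟨-, h2⟩
    rcases Finset.mem_union.mp ha with h | h <;>
      rcases Finset.mem_filter.mp h with ⟨-, h1⟩ <;> linarith [h1]
  have hcards : P.card + N.card + Z.card = 5 := by
    rw [← Finset.card_union_of_disjoint hd1, ← Finset.card_union_of_disjoint hd2, hunion, h5]
  have hP2 : P.card = 2 := by omega
  rcases Finset.card_eq_two.mp hP2 with ⟨α, β, hαβ, hPab⟩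
  have hαP : α ∈ P := by rw [hPab]; simp
  have hβP : β ∈ P := by rw [hPab]; simp
  rcases Finset.mem_filter.mp hαP with ⟨-, hα0⟩
  rcases Finset.mem_filter.mp hβP with ⟨-, hβ0⟩
  have main : ∀ γ δ : ℝ, P = {γ, δ} → ∀ t ∈ F, t = 0 ∨ t = γ ∨ t = -γ ∨ t = δ ∨ t = -δ := by
    intro γ δ hPgd t htF
    have ht' : t ∈ P ∪ N ∪ Z := by rw [hunion]; exact htF
    rcases Finset.mem_union.mp ht' with h | h
    · rcases Finset.mem_union.mp h with h | h
      · rw [hPgd] at h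
        rcases Finset.mem_insert.mp h with h | h
        · exact Or.inr (Or.inl h)
        · exact Or.inr (Or.inr (Or.inr (Or.inl (Finset.mem_singleton.mp h))))
      · rcases Finset.mem_filter.mp h with ⟨htF2, htneg⟩
        have : -t ∈ P := Finset.mem_filter.mpr ⟨hneg t htF2, by linarith⟩
        rw [hPgd] at this
        rcases Finset.mem_insert.mp this with h' | h'
        · exact Or.inr (Or.inr (Or.inl (by linarith [h'])))
        · exact Or.inr (Or.inr (Or.inr (Or.inr (by
            have := Finset.mem_singleton.mp h'; linarith))))
    · rcases Finset.mem_filter.mp h with ⟨-, h0⟩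
      exact Or.inl h0
  rcases lt_or_gt_of_ne hαβ with hlt | hlt
  · exact ⟨α, β, hα0, hlt, main α β hPab⟩
  · refine ⟨β, α, hβ0, hlt, main β α ?_⟩
    rw [hPab]; exact Finset.pair_comm α β
lemma exists_four {s : Finset (Fin 8)} (h : 4 ≤ s.card) :
    ∃ a b c d, a ∈ s ∧ b ∈ s ∧ c ∈ s ∧ d ∈ s ∧
      a ≠ b ∧ a ≠ c ∧ a ≠ d ∧ b ≠ c ∧ b ≠ d ∧ c ≠ d := by
  classical
  obtain ⟨t, hts, htc⟩ := Finset.exists_subset_card_eq h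
  obtain ⟨a, ha⟩ := Finset.card_pos.mp (by omega : 0 < t.card)
  have h3 : (t.erase a).card = 3 := by rw [Finset.card_erase_of_mem ha, htc]
  obtain ⟨b, c, d, hbc, hbd, hcd, habc⟩ := Finset.card_eq_three.mp h3
  have hb : b ∈ t.erase a := by rw [habc]; simp
  have hc : c ∈ t.erase a := by rw [habc]; simp
  have hd : d ∈ t.erase a := by rw [habc]; simp
  refine ⟨a, b, c, d, hts ha, hts (Finset.mem_of_mem_erase hb), hts (Finset.mem_of_mem_erase hc),
    hts (Finset.mem_of_mem_erase hd), ?_, ?_, ?_, hbc, hbd, hcd⟩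
  · exact fun h => (Finset.mem_erase.mp hb).1 h.symm
  · exact fun h => (Finset.mem_erase.mp hc).1 h.symm
  · exact fun h => (Finset.mem_erase.mp hd).1 h.symm

lemma quad_card {i j k l : Fin 8} (h1 : i≠j) (h2 : i≠k) (h3 : i≠l) (h4 : j≠k) (h5 : j≠l)
    (h6 : k≠l) : ({i,j,k,l} : Finset (Fin 8)).card = 4 := by
  rw [Finset.card_insert_of_notMem (by simp [h1, h2, h3]),
    Finset.card_insert_of_notMem (by simp [h4, h5]),
    Finset.card_insert_of_notMem (by simp [h6]), Finset.card_singleton]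

lemma quad_sum (f : Fin 8 → ℝ) {i j k l : Fin 8} (h1 : i≠j) (h2 : i≠k) (h3 : i≠l) (h4 : j≠k)
    (h5 : j≠l) (h6 : k≠l) : ∑ m ∈ ({i,j,k,l} : Finset (Fin 8)), f m = f i + f j + f k + f l := by
  rw [Finset.sum_insert (by simp [h1, h2, h3]), Finset.sum_insert (by simp [h4, h5]),
    Finset.sum_insert (by simp [h6]), Finset.sum_singleton]
  ring

end Aux0
section Aux
set_option maxRecDepth 8000
open Finset

/-- abbreviation for type I vectors -/
def vI (s : Finset (Fin 8)) (ε : Fin 8 → Bool) : E 8 :=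
  WithLp.toLp 2 fun i => if i ∈ s then (if ε i then -(1/2 : ℝ) else 1/2) else 0

def vII (j : Fin 8) (b : Bool) : E 8 :=
  WithLp.toLp 2 fun i => if i = j then (if b then -(1 : ℝ) else 1) else 0

def vIII (m : Fin 8) (ε : Fin 8 → Bool) : E 8 :=
  WithLp.toLp 2 fun i => (if ε i then (-1 : ℝ) else 1) * (if i = m then 3/4 else 1/4)

lemma mem_vI {s : Finset (Fin 8)} (hs : s.card = 4) (ε : Fin 8 → Bool) : vI s ε ∈ poly241 := by
  classical
  letI : DecidableEq (E 8) := Classical.decEq _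
  apply Finset.mem_union_left
  apply Finset.mem_union_left
  unfold typeI
  apply Finset.mem_image.mpr
  exact ⟨(s, ε), Finset.mem_filter.mpr ⟨Finset.mem_univ _, hs⟩, rfl⟩

lemma mem_vII (j : Fin 8) (b : Bool) : vII j b ∈ poly241 := by
  classical
  letI : DecidableEq (E 8) := Classical.decEq _
  apply Finset.mem_union_left
  apply Finset.mem_union_right
  unfold typeII
  apply Finset.mem_image.mpr
  exact ⟨(j, b), Finset.mem_univ _, rfl⟩

lemma mem_vIII (m : Fin 8) {ε : Fin 8 → Bool}
    (hε : ¬ Even (Finset.univ.filter fun i => ε i = true).card) : vIII m ε ∈ poly241 := by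
  classical
  letI : DecidableEq (E 8) := Classical.decEq _
  apply Finset.mem_union_right
  unfold typeIII
  apply Finset.mem_image.mpr
  exact ⟨(m, ε), Finset.mem_filter.mpr ⟨Finset.mem_univ _, hε⟩, rfl⟩

lemma inner_sum' (x y : E 8) : ⟪x, y⟫ = ∑ i, x i * y i := by
  simp [PiLp.inner_apply, RCLike.inner_apply, mul_comm]

lemma inner_vI (x : E 8) (s : Finset (Fin 8)) (ε : Fin 8 → Bool) :
    ⟪x, vI s ε⟫ = ∑ i ∈ s, x i * (if ε i then -(1/2 : ℝ) else 1/2) := by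
  rw [inner_sum']
  have h : ∀ i ∈ Finset.univ, x i * vI s ε i
      = (if i ∈ s then x i * (if ε i then -(1/2:ℝ) else 1/2) else 0) := by
    intro i _
    unfold vI
    simp only [PiLp.toLp_apply]
    split <;> simp
  rw [Finset.sum_congr rfl h, Finset.sum_ite_mem, Finset.univ_inter]

lemma inner_vII (x : E 8) (j : Fin 8) (b : Bool) :
    ⟪x, vII j b⟫ = (if b then (-1:ℝ) else 1) * x j := by
  rw [inner_sum']
  have h : ∀ i ∈ Finset.univ, x i * vII j b i
      = (if i = j then (if b then (-1:ℝ) else 1) * x i else 0) := by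
    intro i _
    unfold vII
    simp only [PiLp.toLp_apply]
    split <;> cases b <;> simp <;> ring
  rw [Finset.sum_congr rfl h, Finset.sum_ite_eq' Finset.univ j]
  simp

lemma inner_vIII (x : E 8) (m : Fin 8) (ε : Fin 8 → Bool) :
    ⟪x, vIII m ε⟫ = ∑ i, x i * ((if ε i then (-1 : ℝ) else 1) * (if i = m then 3/4 else 1/4)) := by
  rw [inner_sum']
  rfl

lemma neg_vI (s : Finset (Fin 8)) (ε : Fin 8 → Bool) : -(vI s ε) = vI s (fun i => !(ε i)) := by
  ext i
  show -(vI s ε i) = _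
  unfold vI
  simp only [PiLp.toLp_apply]
  split
  · cases h : ε i <;> simp [h]
  · simp

lemma neg_vII (j : Fin 8) (b : Bool) : -(vII j b) = vII j (!b) := by
  ext i
  show -(vII j b i) = _
  unfold vII
  simp only [PiLp.toLp_apply]
  split
  · cases b <;> simp
  · simp

lemma neg_vIII (m : Fin 8) (ε : Fin 8 → Bool) : -(vIII m ε) = vIII m (fun i => !(ε i)) := by
  ext i
  show -(vIII m ε i) = _
  unfold vIII
  simp only [PiLp.toLp_apply]
  rcases Bool.eq_false_or_eq_true (ε i) with h | h <;> simp [h] <;> split <;> norm_num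

lemma flip_parity (ε : Fin 8 → Bool) :
    (Finset.univ.filter fun i => (!(ε i)) = true).card
      = 8 - (Finset.univ.filter fun i => ε i = true).card := by
  have h := Finset.card_filter_add_card_filter_not (s := (Finset.univ : Finset (Fin 8)))
    (p := fun i => ε i = true)
  have h2 : (Finset.univ.filter fun i => (!(ε i)) = true)
      = (Finset.univ.filter fun i => ¬ (ε i = true)) := by
    apply Finset.filter_congr
    intro i _
    cases ε i <;> simp
  rw [h2]
  simp only [Finset.card_univ, Fintype.card_fin] at h
  omega

lemma neg_mem_poly241 {v : E 8} (hv : v ∈ poly241) : -v ∈ poly241 := by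
  classical
  letI : DecidableEq (E 8) := Classical.decEq _
  rcases Finset.mem_union.mp hv with hv' | hv'
  · rcases Finset.mem_union.mp hv' with h | h
    · rcases Finset.mem_image.mp h with ⟨p, hp, rfl⟩
      rcases Finset.mem_filter.mp hp with ⟨-, hc⟩
      have : -(vI p.1 p.2) ∈ poly241 := by
        rw [neg_vI]
        exact mem_vI hc _
      exact this
    · rcases Finset.mem_image.mp h with ⟨p, hp, rfl⟩
      have : -(vII p.1 p.2) ∈ poly241 := by
        rw [neg_vII]
        exact mem_vII _ _
      exact this
  · rcases Finset.mem_image.mp hv' with ⟨p, hp, rfl⟩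
    rcases Finset.mem_filter.mp hp with ⟨-, hc⟩
    have : -(vIII p.1 p.2) ∈ poly241 := by
      rw [neg_vIII]
      apply mem_vIII
      rw [flip_parity]
      have hn : (Finset.univ.filter fun i => p.2 i = true).card ≤ 8 := by
        have := Finset.card_filter_le (Finset.univ : Finset (Fin 8)) (fun i => p.2 i = true)
        simpa using this
      revert hc hn
      generalize (Finset.univ.filter fun i => p.2 i = true).card = n
      intro hc hn
      rcases Nat.even_or_odd n with h | h
      · exact absurd h hc
      · intro h8
        rcases h with ⟨k, hk⟩
        rcases h8 with ⟨j, hj⟩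
        omega
    exact this

end Aux
section Aux2
set_option maxRecDepth 8000
open Finset

def xF1 (s : Finset (Fin 8)) (ε : Fin 8 → Bool) : E 8 :=
  WithLp.toLp 2 fun i => if i ∈ s then (if ε i then -(1 / Real.sqrt 2) else 1 / Real.sqrt 2) else 0

def xF2 (ε : Fin 8 → Bool) : E 8 :=
  WithLp.toLp 2 fun i => if ε i then -(1 / (2 * Real.sqrt 2)) else 1 / (2 * Real.sqrt 2)

def W5 (w : ℝ) : Prop := w = 0 ∨ w = 1 ∨ w = -1 ∨ w = 2 ∨ w = -2

lemma W5_1 (n K : ℕ) (hn : n ≤ 2) (hK : K ≤ n) : W5 ((n:ℝ) - 2*K) := by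
  unfold W5; interval_cases n <;> interval_cases K <;> norm_num

lemma W5_2 (K : ℕ) (hK : K ≤ 4) : W5 (((4:ℝ) - 2*K)/2) := by
  unfold W5; interval_cases K <;> norm_num

lemma W5_3 (u u' K : ℕ) (hu : u ≤ 1) (hu' : u' ≤ u) (hK : K ≤ 2) :
    W5 (1 + (u:ℝ) - K - 2*u') := by
  unfold W5; interval_cases u <;> interval_cases u' <;> interval_cases K <;> norm_num

lemma W5_4 (k u' : ℕ) (hk : k ≤ 3) (hu' : u' ≤ 1) : W5 (2 - (k:ℝ) - u') := by
  unfold W5; interval_cases k <;> interval_cases u' <;> norm_num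

lemma mem_S₀ {c w : ℝ} (hw : W5 w) :
    w * c ∈ ({0, c, -c, 2*c, -(2*c)} : Set ℝ) := by
  simp only [Set.mem_insert_iff, Set.mem_singleton_iff]
  rcases hw with rfl | rfl | rfl | rfl | rfl
  · left; ring
  · right; left; ring
  · right; right; left; ring
  · right; right; right; left; ring
  · right; right; right; right; ring

lemma sum_sgn_split (t : Finset (Fin 8)) (ε δ : Fin 8 → Bool) (g : Fin 8 → ℝ) :
    ∑ i ∈ t, ((if ε i then (-1:ℝ) else 1) * (if δ i then (-1:ℝ) else 1)) * g i
      = ∑ i ∈ t, g i - 2 * ∑ i ∈ t.filter (fun i => ε i ≠ δ i), g i := by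
  classical
  rw [← Finset.sum_filter_add_sum_filter_not t (fun i => ε i ≠ δ i)
    (fun i => ((if ε i then (-1:ℝ) else 1) * (if δ i then (-1:ℝ) else 1)) * g i)]
  rw [← Finset.sum_filter_add_sum_filter_not t (fun i => ε i ≠ δ i) g]
  have h1 : ∀ i ∈ t.filter (fun i => ε i ≠ δ i),
      ((if ε i then (-1:ℝ) else 1) * (if δ i then (-1:ℝ) else 1)) * g i = -(g i) := by
    intro i hi
    rcases Finset.mem_filter.mp hi with ⟨-, h⟩
    cases hε : ε i <;> cases hδ : δ i <;> simp_all <;> ring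
  have h2 : ∀ i ∈ t.filter (fun i => ¬ ε i ≠ δ i),
      ((if ε i then (-1:ℝ) else 1) * (if δ i then (-1:ℝ) else 1)) * g i = g i := by
    intro i hi
    rcases Finset.mem_filter.mp hi with ⟨-, h⟩
    cases hε : ε i <;> cases hδ : δ i <;> simp_all
  rw [Finset.sum_congr rfl h1, Finset.sum_congr rfl h2, Finset.sum_neg_distrib]
  ring

lemma innerF1_I {s : Finset (Fin 8)} {ε : Fin 8 → Bool} (hs : s.card = 2)
    (s' : Finset (Fin 8)) (δ : Fin 8 → Bool) :
    ∃ w : ℝ, W5 w ∧ ⟪xF1 s ε, vI s' δ⟫ = w * (1/(2*Real.sqrt 2)) := by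
  classical
  rw [inner_sum']
  set t := s ∩ s' with ht
  have hsub : t ⊆ Finset.univ := Finset.subset_univ t
  have hvan : ∀ i ∈ Finset.univ, i ∉ t → xF1 s ε i * vI s' δ i = 0 := by
    intro i _ hit
    rw [ht, Finset.mem_inter] at hit
    push_neg at hit
    by_cases his : i ∈ s
    · have : i ∉ s' := hit his
      unfold xF1 vI
      simp [this]
    · unfold xF1 vI
      simp [his]
  rw [← Finset.sum_subset hsub hvan]
  have hterm : ∀ i ∈ t, xF1 s ε i * vI s' δ i
      = ((if ε i then (-1:ℝ) else 1) * (if δ i then (-1:ℝ) else 1)) * (1/(2*Real.sqrt 2)) := by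
    intro i hi
    rw [ht, Finset.mem_inter] at hi
    unfold xF1 vI
    simp only [PiLp.toLp_apply]
    rw [if_pos hi.1, if_pos hi.2]
    cases ε i <;> cases δ i <;> simp <;> ring
  rw [Finset.sum_congr rfl hterm, sum_sgn_split]
  set K := (t.filter (fun i => ε i ≠ δ i)).card with hK
  have hn : t.card ≤ 2 := by
    rw [← hs]; exact Finset.card_le_card (Finset.inter_subset_left)
  have hKn : K ≤ t.card := Finset.card_le_card (Finset.filter_subset _ _)
  refine ⟨(t.card : ℝ) - 2*K, W5_1 _ _ hn hKn, ?_⟩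
  rw [Finset.sum_const, Finset.sum_const]
  push_cast
  ring

end Aux2
section Aux3
set_option maxRecDepth 8000
open Finset

lemma innerF1_II {s : Finset (Fin 8)} {ε : Fin 8 → Bool}
    (j : Fin 8) (b : Bool) :
    ∃ w : ℝ, W5 w ∧ ⟪xF1 s ε, vII j b⟫ = w * (1/(2*Real.sqrt 2)) := by
  rw [inner_vII]
  by_cases hj : j ∈ s
  · have hx : xF1 s ε j = (if ε j then (-1:ℝ) else 1) * (1/Real.sqrt 2) := by
      unfold xF1
      simp only [PiLp.toLp_apply]
      rw [if_pos hj]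
      cases ε j <;> simp <;> ring
    rw [hx]
    refine ⟨(if b then (-1:ℝ) else 1)*(if ε j then (-1:ℝ) else 1)*2, ?_, by ring⟩
    cases b <;> cases ε j <;> norm_num [W5]
  · have hx : xF1 s ε j = 0 := by unfold xF1; simp only [PiLp.toLp_apply]; rw [if_neg hj]
    rw [hx]
    exact ⟨0, Or.inl rfl, by ring⟩

lemma innerF1_III {s : Finset (Fin 8)} {ε : Fin 8 → Bool} (hs : s.card = 2)
    (m : Fin 8) (δ : Fin 8 → Bool) :
    ∃ w : ℝ, W5 w ∧ ⟪xF1 s ε, vIII m δ⟫ = w * (1/(2*Real.sqrt 2)) := by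
  classical
  rw [inner_sum']
  have hvan : ∀ i ∈ Finset.univ, i ∉ s → xF1 s ε i * vIII m δ i = 0 := by
    intro i _ his
    unfold xF1 vIII
    simp [his]
  rw [← Finset.sum_subset (Finset.subset_univ s) hvan]
  have hterm : ∀ i ∈ s, xF1 s ε i * vIII m δ i
      = ((if ε i then (-1:ℝ) else 1) * (if δ i then (-1:ℝ) else 1)) *
          ((1/Real.sqrt 2) * ((1:ℝ)/4) + (if i = m then (1/Real.sqrt 2) * ((1:ℝ)/2) else 0)) := by
    intro i hi
    unfold xF1 vIII
    simp only [PiLp.toLp_apply]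
    rw [if_pos hi]
    by_cases him : i = m <;> cases ε i <;> cases δ i <;> simp [him] <;> ring
  rw [Finset.sum_congr rfl hterm, sum_sgn_split]
  set M := s.filter (fun i => ε i ≠ δ i) with hM
  have hMs : M ⊆ s := Finset.filter_subset _ _
  have hgen : ∀ t : Finset (Fin 8),
      ∑ i ∈ t, ((1/Real.sqrt 2) * ((1:ℝ)/4) + (if i = m then (1/Real.sqrt 2) * ((1:ℝ)/2) else 0))
        = (t.card : ℝ) * ((1/Real.sqrt 2) * ((1:ℝ)/4))
          + (if m ∈ t then (1/Real.sqrt 2) * ((1:ℝ)/2) else 0) := by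
    intro t
    rw [Finset.sum_add_distrib, Finset.sum_const, nsmul_eq_mul]
    congr 1
    simp only [Finset.sum_ite_eq' t m (fun _ => (1/Real.sqrt 2) * ((1:ℝ)/2))]
  rw [hgen s, hgen M, hs]
  set K := M.card with hK
  have hK2 : K ≤ 2 := hs ▸ Finset.card_le_card hMs
  by_cases hms : m ∈ s
  · by_cases hmM : m ∈ M
    · rw [if_pos hms, if_pos hmM]
      refine ⟨1 + (1:ℕ) - K - 2*(1:ℕ), W5_3 1 1 K le_rfl le_rfl hK2, by push_cast; ring⟩
    · rw [if_pos hms, if_neg hmM]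
      refine ⟨1 + (1:ℕ) - K - 2*(0:ℕ), W5_3 1 0 K le_rfl (by norm_num) hK2, by push_cast; ring⟩
  · have hmM : m ∉ M := fun h => hms (hMs h)
    rw [if_neg hms, if_neg hmM]
    refine ⟨1 + (0:ℕ) - K - 2*(0:ℕ), W5_3 0 0 K (by norm_num) le_rfl hK2, by push_cast; ring⟩

lemma innerF2_II {ε : Fin 8 → Bool} (j : Fin 8) (b : Bool) :
    ∃ w : ℝ, W5 w ∧ ⟪xF2 ε, vII j b⟫ = w * (1/(2*Real.sqrt 2)) := by
  rw [inner_vII]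
  have hx : xF2 ε j = (if ε j then (-1:ℝ) else 1) * (1/(2*Real.sqrt 2)) := by
    unfold xF2
    simp only [PiLp.toLp_apply]
    cases ε j <;> simp <;> ring
  rw [hx]
  refine ⟨(if b then (-1:ℝ) else 1)*(if ε j then (-1:ℝ) else 1), ?_, by ring⟩
  cases b <;> cases ε j <;> norm_num [W5]

lemma innerF2_I {ε : Fin 8 → Bool} {s' : Finset (Fin 8)} (hs' : s'.card = 4)
    (δ : Fin 8 → Bool) :
    ∃ w : ℝ, W5 w ∧ ⟪xF2 ε, vI s' δ⟫ = w * (1/(2*Real.sqrt 2)) := by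
  classical
  rw [inner_vI]
  have hterm : ∀ i ∈ s', xF2 ε i * (if δ i then -(1/2 : ℝ) else 1/2)
      = ((if ε i then (-1:ℝ) else 1) * (if δ i then (-1:ℝ) else 1)) * ((1/(2*Real.sqrt 2)) * (1/2)) := by
    intro i _
    unfold xF2
    simp only [PiLp.toLp_apply]
    cases ε i <;> cases δ i <;> simp <;> ring
  rw [Finset.sum_congr rfl hterm, sum_sgn_split]
  set K := (s'.filter (fun i => ε i ≠ δ i)).card with hK
  have hK4 : K ≤ 4 := hs' ▸ Finset.card_le_card (Finset.filter_subset _ _)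
  rw [Finset.sum_const, Finset.sum_const, hs']
  refine ⟨((4:ℝ) - 2*K)/2, W5_2 K hK4, by push_cast; ring⟩

lemma innerF2_III {ε : Fin 8 → Bool}
    (hε : Even (Finset.univ.filter fun i => ε i = true).card)
    (m : Fin 8) {δ : Fin 8 → Bool}
    (hδ : ¬ Even (Finset.univ.filter fun i => δ i = true).card) :
    ∃ w : ℝ, W5 w ∧ ⟪xF2 ε, vIII m δ⟫ = w * (1/(2*Real.sqrt 2)) := by
  classical
  rw [inner_sum']
  have hterm : ∀ i ∈ (Finset.univ : Finset (Fin 8)), xF2 ε i * vIII m δ i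
      = ((if ε i then (-1:ℝ) else 1) * (if δ i then (-1:ℝ) else 1)) *
          ((1/(2*Real.sqrt 2)) * ((1:ℝ)/4)
            + (if i = m then (1/(2*Real.sqrt 2)) * ((1:ℝ)/2) else 0)) := by
    intro i _
    unfold xF2 vIII
    simp only [PiLp.toLp_apply]
    by_cases him : i = m <;> cases ε i <;> cases δ i <;> simp [him] <;> ring
  rw [Finset.sum_congr rfl hterm, sum_sgn_split]
  set M := (Finset.univ : Finset (Fin 8)).filter (fun i => ε i ≠ δ i) with hM
  have hgen : ∀ t : Finset (Fin 8),
      ∑ i ∈ t, ((1/(2*Real.sqrt 2)) * ((1:ℝ)/4) + (if i = m then (1/(2*Real.sqrt 2)) * ((1:ℝ)/2) else 0))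
        = (t.card : ℝ) * ((1/(2*Real.sqrt 2)) * ((1:ℝ)/4))
          + (if m ∈ t then (1/(2*Real.sqrt 2)) * ((1:ℝ)/2) else 0) := by
    intro t
    rw [Finset.sum_add_distrib, Finset.sum_const, nsmul_eq_mul]
    congr 1
    simp only [Finset.sum_ite_eq' t m (fun _ => (1/(2*Real.sqrt 2)) * ((1:ℝ)/2))]
  rw [hgen, hgen]
  have hKodd : ¬ Even M.card := by
    rw [hM]
    exact parity_mismatch ε δ hε hδ
  have hK8 : M.card ≤ 8 := by
    have := Finset.card_filter_le (Finset.univ : Finset (Fin 8)) (fun i => ε i ≠ δ i)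
    simpa using this
  rcases Nat.even_or_odd M.card with h | h
  · exact absurd h hKodd
  rcases h with ⟨k, hk⟩
  have hk3 : k ≤ 3 := by omega
  rw [Finset.card_univ, Fintype.card_fin, hk]
  by_cases hmM : m ∈ M
  · rw [if_pos (Finset.mem_univ m), if_pos hmM]
    refine ⟨2 - (k:ℝ) - (1:ℕ), W5_4 k 1 hk3 le_rfl, by push_cast; ring⟩
  · rw [if_pos (Finset.mem_univ m), if_neg hmM]
    refine ⟨2 - (k:ℝ) - (0:ℕ), W5_4 k 0 hk3 (by norm_num), by push_cast; ring⟩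

end Aux3
section Aux4
set_option maxRecDepth 8000
open Finset

lemma ncard_five {c : ℝ} (hc : 0 < c) : ({0, c, -c, 2*c, -(2*c)} : Set ℝ).ncard = 5 := by
  have h1 : (0:ℝ) ∉ ({c, -c, 2*c, -(2*c)} : Set ℝ) := by
    simp only [Set.mem_insert_iff, Set.mem_singleton_iff]
    push_neg
    exact ⟨by linarith, by linarith, by linarith, by linarith⟩
  have h2 : c ∉ ({-c, 2*c, -(2*c)} : Set ℝ) := by
    simp only [Set.mem_insert_iff, Set.mem_singleton_iff]
    push_neg
    exact ⟨by linarith, by linarith, by linarith⟩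
  have h3 : -c ∉ ({2*c, -(2*c)} : Set ℝ) := by
    simp only [Set.mem_insert_iff, Set.mem_singleton_iff]
    push_neg
    exact ⟨by linarith, by linarith⟩
  rw [Set.ncard_insert_of_notMem h1 (Set.toFinite _),
    Set.ncard_insert_of_notMem h2 (Set.toFinite _),
    Set.ncard_insert_of_notMem h3 (Set.toFinite _),
    Set.ncard_pair (by intro h; nlinarith : (2*c : ℝ) ≠ -(2*c))]

lemma part2_main : ∀ x ∈ e8Roots, (fun y => ⟪x, y⟫) '' (↑poly241 : Set (E 8)) =
    ({0, 1 / (2 * Real.sqrt 2), -(1 / (2 * Real.sqrt 2)),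
      1 / Real.sqrt 2, -(1 / Real.sqrt 2)} : Set ℝ) := by
  classical
  letI : DecidableEq (E 8) := Classical.decEq _
  intro x hx
  rw [show (1 / Real.sqrt 2 : ℝ) = 2 * (1/(2*Real.sqrt 2)) from by ring]
  have hsub : ∀ {x' : E 8}, (∀ v ∈ poly241, ∃ w : ℝ, W5 w ∧ ⟪x', v⟫ = w * (1/(2*Real.sqrt 2)))
      → (fun y => ⟪x', y⟫) '' (↑poly241 : Set (E 8)) ⊆
        ({0, 1 / (2 * Real.sqrt 2), -(1 / (2 * Real.sqrt 2)),
          2 * (1/(2*Real.sqrt 2)), -(2 * (1/(2*Real.sqrt 2)))} : Set ℝ) := by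
    intro x' hall
    rintro t ⟨v, hv, rfl⟩
    obtain ⟨w, hw, heq⟩ := hall v hv
    show ⟪x', v⟫ ∈ _
    rw [heq]
    exact mem_S₀ hw
  rcases Finset.mem_union.mp hx with h | h
  · -- family 1
    obtain ⟨p, hp, hxeq⟩ := Finset.mem_image.mp h
    obtain ⟨-, hp2⟩ := Finset.mem_filter.mp hp
    have hxf : x = xF1 p.1 p.2 := hxeq.symm
    subst hxf
    apply Set.Subset.antisymm
    · apply hsub
      intro v hv
      rcases Finset.mem_union.mp hv with hv1 | hv3
      · rcases Finset.mem_union.mp hv1 with hA | hB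
        · obtain ⟨q, hq, hveq⟩ := Finset.mem_image.mp hA
          obtain ⟨-, hq4⟩ := Finset.mem_filter.mp hq
          have : v = vI q.1 q.2 := hveq.symm
          subst this
          exact innerF1_I hp2 q.1 q.2
        · obtain ⟨q, hq, hveq⟩ := Finset.mem_image.mp hB
          have : v = vII q.1 q.2 := hveq.symm
          subst this
          exact innerF1_II q.1 q.2
      · obtain ⟨q, hq, hveq⟩ := Finset.mem_image.mp hv3
        have : v = vIII q.1 q.2 := hveq.symm
        subst this
        exact innerF1_III hp2 q.1 q.2
    · -- witnesses, family 1
      obtain ⟨a, ha⟩ := Finset.card_pos.mp (by rw [hp2]; norm_num : 0 < p.1.card)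
      have hcompl6 : p.1ᶜ.card = 6 := by
        rw [Finset.card_compl, hp2]
        rfl
      obtain ⟨j, hjmem⟩ := Finset.card_pos.mp (by rw [hcompl6]; norm_num : 0 < p.1ᶜ.card)
      have hj : j ∉ p.1 := Finset.mem_compl.mp hjmem
      obtain ⟨t3, ht3sub, ht3card⟩ := Finset.exists_subset_card_eq (s := p.1ᶜ) (n := 3) (by omega)
      have hat3 : a ∉ t3 := fun hmem => Finset.mem_compl.mp (ht3sub hmem) ha
      have hcard4 : (insert a t3).card = 4 := by
        rw [Finset.card_insert_of_notMem hat3, ht3card]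
      have hterm0 : ∀ i ∈ t3, ∀ (δ : Fin 8 → Bool),
          xF1 p.1 p.2 i * (if δ i then -(1/2 : ℝ) else 1/2) = 0 := by
        intro i hi δ
        have : i ∉ p.1 := Finset.mem_compl.mp (ht3sub hi)
        unfold xF1
        simp [this]
      intro t ht
      simp only [Set.mem_insert_iff, Set.mem_singleton_iff] at ht
      rcases ht with rfl | rfl | rfl | rfl | rfl
      · refine ⟨vII j false, Finset.mem_coe.mpr (mem_vII j false), ?_⟩
        show ⟪xF1 p.1 p.2, vII j false⟫ = 0
        rw [inner_vII]
        unfold xF1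
        simp [hj]
      · refine ⟨vI (insert a t3) p.2, Finset.mem_coe.mpr (mem_vI hcard4 p.2), ?_⟩
        show ⟪xF1 p.1 p.2, vI (insert a t3) p.2⟫ = _
        rw [inner_vI, Finset.sum_insert hat3,
          Finset.sum_eq_zero (fun i hi => hterm0 i hi p.2)]
        unfold xF1
        simp only [PiLp.toLp_apply]
        rw [if_pos ha]
        cases hb : p.2 a <;> simp <;> ring
      · refine ⟨vI (insert a t3) (fun i => !(p.2 i)),
          Finset.mem_coe.mpr (mem_vI hcard4 _), ?_⟩
        show ⟪xF1 p.1 p.2, vI (insert a t3) (fun i => !(p.2 i))⟫ = _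
        rw [inner_vI, Finset.sum_insert hat3,
          Finset.sum_eq_zero (fun i hi => hterm0 i hi (fun k => !(p.2 k)))]
        unfold xF1
        simp only [PiLp.toLp_apply]
        rw [if_pos ha]
        cases hb : p.2 a <;> simp <;> ring
      · refine ⟨vII a (p.2 a), Finset.mem_coe.mpr (mem_vII a (p.2 a)), ?_⟩
        show ⟪xF1 p.1 p.2, vII a (p.2 a)⟫ = _
        rw [inner_vII]
        unfold xF1
        simp only [PiLp.toLp_apply]
        rw [if_pos ha]
        cases hb : p.2 a <;> simp <;> ring
      · refine ⟨vII a (!(p.2 a)), Finset.mem_coe.mpr (mem_vII a (!(p.2 a))), ?_⟩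
        show ⟪xF1 p.1 p.2, vII a (!(p.2 a))⟫ = _
        rw [inner_vII]
        unfold xF1
        simp only [PiLp.toLp_apply]
        rw [if_pos ha]
        cases hb : p.2 a <;> simp <;> ring
  · -- family 2
    obtain ⟨ε, hpf, hxeq⟩ := Finset.mem_image.mp h
    obtain ⟨-, hεeven⟩ := Finset.mem_filter.mp hpf
    have hxf : x = xF2 ε := hxeq.symm
    subst hxf
    apply Set.Subset.antisymm
    · apply hsub
      intro v hv
      rcases Finset.mem_union.mp hv with hv1 | hv3
      · rcases Finset.mem_union.mp hv1 with hA | hB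
        · obtain ⟨q, hq, hveq⟩ := Finset.mem_image.mp hA
          obtain ⟨-, hq4⟩ := Finset.mem_filter.mp hq
          have : v = vI q.1 q.2 := hveq.symm
          subst this
          exact innerF2_I hq4 q.2
        · obtain ⟨q, hq, hveq⟩ := Finset.mem_image.mp hB
          have : v = vII q.1 q.2 := hveq.symm
          subst this
          exact innerF2_II q.1 q.2
      · obtain ⟨q, hq, hveq⟩ := Finset.mem_image.mp hv3
        obtain ⟨-, hqodd⟩ := Finset.mem_filter.mp hq
        have : v = vIII q.1 q.2 := hveq.symm
        subst this
        exact innerF2_III hεeven q.1 hqodd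
    · -- witnesses, family 2
      have hma : ∀ i, xF2 ε i * (if ε i then -(1/2:ℝ) else 1/2)
          = (1/(2*Real.sqrt 2)) * (1/2) := by
        intro i
        unfold xF2
        simp only [PiLp.toLp_apply]
        cases hb : ε i <;> simp <;> ring
      have hmi : ∀ i, xF2 ε i * (if (!(ε i)) then -(1/2:ℝ) else 1/2)
          = -((1/(2*Real.sqrt 2)) * (1/2)) := by
        intro i
        unfold xF2
        simp only [PiLp.toLp_apply]
        cases hb : ε i <;> simp <;> ring
      have hQ4 : ({0,1,2,3} : Finset (Fin 8)).card = 4 := by decide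
      have hsumQ : ∀ δ : Fin 8 → Bool, ⟪xF2 ε, vI ({0,1,2,3} : Finset (Fin 8)) δ⟫
          = xF2 ε 0 * (if δ 0 then -(1/2:ℝ) else 1/2)
            + xF2 ε 1 * (if δ 1 then -(1/2:ℝ) else 1/2)
            + xF2 ε 2 * (if δ 2 then -(1/2:ℝ) else 1/2)
            + xF2 ε 3 * (if δ 3 then -(1/2:ℝ) else 1/2) := by
        intro δ
        rw [inner_vI, Finset.sum_insert (by decide), Finset.sum_insert (by decide),
          Finset.sum_insert (by decide), Finset.sum_singleton]
        ring
      set δ0 : Fin 8 → Bool := fun i => if i = 0 ∨ i = 1 then ε i else !(ε i) with hδ0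
      have hδ00 : δ0 0 = ε 0 := by rw [hδ0]; exact if_pos (by norm_num)
      have hδ01 : δ0 1 = ε 1 := by rw [hδ0]; exact if_pos (by norm_num)
      have hδ02 : δ0 2 = !(ε 2) := by rw [hδ0]; exact if_neg (by decide)
      have hδ03 : δ0 3 = !(ε 3) := by rw [hδ0]; exact if_neg (by decide)
      intro t ht
      simp only [Set.mem_insert_iff, Set.mem_singleton_iff] at ht
      rcases ht with rfl | rfl | rfl | rfl | rfl
      · refine ⟨vI ({0,1,2,3} : Finset (Fin 8)) δ0, Finset.mem_coe.mpr (mem_vI hQ4 δ0), ?_⟩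
        show ⟪xF2 ε, vI ({0,1,2,3} : Finset (Fin 8)) δ0⟫ = 0
        rw [hsumQ δ0, hδ00, hδ01, hδ02, hδ03, hma 0, hma 1, hmi 2, hmi 3]
        ring
      · refine ⟨vII 0 (ε 0), Finset.mem_coe.mpr (mem_vII 0 (ε 0)), ?_⟩
        show ⟪xF2 ε, vII 0 (ε 0)⟫ = _
        rw [inner_vII]
        unfold xF2
        simp only [PiLp.toLp_apply]
        cases hb : ε 0 <;> simp <;> ring
      · refine ⟨vII 0 (!(ε 0)), Finset.mem_coe.mpr (mem_vII 0 (!(ε 0))), ?_⟩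
        show ⟪xF2 ε, vII 0 (!(ε 0))⟫ = _
        rw [inner_vII]
        unfold xF2
        simp only [PiLp.toLp_apply]
        cases hb : ε 0 <;> simp <;> ring
      · refine ⟨vI ({0,1,2,3} : Finset (Fin 8)) ε, Finset.mem_coe.mpr (mem_vI hQ4 ε), ?_⟩
        show ⟪xF2 ε, vI ({0,1,2,3} : Finset (Fin 8)) ε⟫ = _
        rw [hsumQ ε, hma 0, hma 1, hma 2, hma 3]
        ring
      · refine ⟨vI ({0,1,2,3} : Finset (Fin 8)) (fun i => !(ε i)),
          Finset.mem_coe.mpr (mem_vI hQ4 _), ?_⟩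
        show ⟪xF2 ε, vI ({0,1,2,3} : Finset (Fin 8)) (fun i => !(ε i))⟫ = _
        rw [hsumQ _, hmi 0, hmi 1, hmi 2, hmi 3]
        ring

end Aux4
section Aux5
set_option maxRecDepth 8000
open Finset

lemma exists_outside {s : Finset (Fin 8)} (h : s.card < 8) : ∃ l, l ∉ s := by
  by_contra h'
  push_neg at h'
  have : s = Finset.univ := Finset.eq_univ_iff_forall.mpr h'
  rw [this] at h
  simp at h

lemma sign_reconstruct {x : E 8} {i : Fin 8} {v : ℝ} (h : |x i| = v) :
    (if decide (x i < 0) then -v else v) = x i := by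
  by_cases hlt : x i < 0
  · rw [if_pos (by simpa using hlt), ← h, abs_of_neg hlt, neg_neg]
  · rw [if_neg (by simpa using hlt), ← h, abs_of_nonneg (le_of_not_gt hlt)]

set_option maxHeartbeats 2000000 in
lemma forward_dir (x : E 8) (hx : x ∈ Metric.sphere (0 : E 8) 1)
    (h5 : ((fun y => ⟪x, y⟫) '' (↑poly241 : Set (E 8))).ncard = 5) : x ∈ e8Roots := by
  classical
  letI : DecidableEq (E 8) := Classical.decEq _
  have hFcoe : ((fun y => ⟪x, y⟫) '' (↑poly241 : Set (E 8)))
      = ↑(poly241.image (fun y => ⟪x, y⟫)) := (Finset.coe_image).symm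
  set F : Finset ℝ := poly241.image (fun y => ⟪x, y⟫) with hF
  have hF5 : F.card = 5 := by
    rw [← Set.ncard_coe_finset, ← hFcoe]
    exact h5
  have hmemF : ∀ v ∈ poly241, ⟪x, v⟫ ∈ F := fun v hv => Finset.mem_image_of_mem _ hv
  have hFneg : ∀ t ∈ F, -t ∈ F := by
    intro t ht
    obtain ⟨v, hv, rfl⟩ := Finset.mem_image.mp ht
    have : -⟪x, v⟫ = ⟪x, -v⟫ := (inner_neg_right _ _).symm
    rw [this]
    exact hmemF _ (neg_mem_poly241 hv)
  obtain ⟨α, β, hα, hαβ, hD⟩ := five_structure F hF5 hFneg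
  have hβ : 0 < β := hα.trans hαβ
  -- coordinates are in F
  have hco : ∀ i, x i ∈ F := by
    intro i
    have h := hmemF _ (mem_vII i false)
    rwa [inner_vII, if_neg (by simp), one_mul] at h
  have htri : ∀ i, x i = 0 ∨ |x i| = α ∨ |x i| = β := by
    intro i
    rcases hD _ (hco i) with h | h | h | h | h
    · exact Or.inl h
    · exact Or.inr (Or.inl (by rw [h]; exact abs_of_pos hα))
    · exact Or.inr (Or.inl (by rw [h, abs_neg]; exact abs_of_pos hα))
    · exact Or.inr (Or.inr (by rw [h]; exact abs_of_pos hβ))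
    · exact Or.inr (Or.inr (by rw [h, abs_neg]; exact abs_of_pos hβ))
  set sg : Fin 8 → Bool := fun i => decide (x i < 0) with hsg
  have hsgm : ∀ i, (if sg i then (-1:ℝ) else 1) * x i = |x i| := by
    intro i
    by_cases h : x i < 0
    · rw [if_pos (by simp [hsg, h]), abs_of_neg h]; ring
    · rw [if_neg (by simp [hsg, h]), abs_of_nonneg (le_of_not_gt h)]; ring
  -- type I constraints
  have absI : ∀ s : Finset (Fin 8), s.card = 4 → (∑ i ∈ s, |x i|) * (1/2) ∈ F := by
    intro s hs
    have h := hmemF _ (mem_vI hs sg)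
    rw [inner_vI] at h
    have hterm : ∀ i ∈ s, x i * (if sg i then -(1/2:ℝ) else 1/2) = |x i| * (1/2) := by
      intro i _
      rw [← hsgm i]
      cases h' : sg i
      · simp only [if_false, Bool.false_eq_true]; ring
      · simp only [if_true]; ring
    rwa [Finset.sum_congr rfl hterm, ← Finset.sum_mul] at h
  have hcon4 : ∀ i j k l : Fin 8, i≠j → i≠k → i≠l → j≠k → j≠l → k≠l →
      ((|x i| + |x j| + |x k| + |x l|) * (1/2) = 0
        ∨ (|x i| + |x j| + |x k| + |x l|) * (1/2) = α
        ∨ (|x i| + |x j| + |x k| + |x l|) * (1/2) = -α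
        ∨ (|x i| + |x j| + |x k| + |x l|) * (1/2) = β
        ∨ (|x i| + |x j| + |x k| + |x l|) * (1/2) = -β) := by
    intro i j k l h1 h2 h3 h4 h5' h6
    have h := absI {i,j,k,l} (quad_card h1 h2 h3 h4 h5' h6)
    rw [quad_sum (fun m => |x m|) h1 h2 h3 h4 h5' h6] at h
    exact hD _ h
  -- type III constraints
  have absIII : ((∃ z, x z = 0) ∨ ¬ Even ((univ.filter fun i => sg i = true)).card) →
      ∀ m, ((∑ i, |x i|) * (1/4) + |x m| * (1/2) = 0
        ∨ (∑ i, |x i|) * (1/4) + |x m| * (1/2) = α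
        ∨ (∑ i, |x i|) * (1/4) + |x m| * (1/2) = -α
        ∨ (∑ i, |x i|) * (1/4) + |x m| * (1/2) = β
        ∨ (∑ i, |x i|) * (1/4) + |x m| * (1/2) = -β) := by
    intro hp m
    have hε : ∃ ε : Fin 8 → Bool, (¬ Even ((univ.filter fun i => ε i = true)).card)
        ∧ ∀ i, (if ε i then (-1:ℝ) else 1) * x i = |x i| := by
      by_cases hodd : Even ((univ.filter fun i => sg i = true)).card
      · rcases hp with ⟨z, hz⟩ | hodd'
        · refine ⟨fun i => if i = z then !(sg i) else sg i, ?_, ?_⟩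
          · have hsz : sg z = false := by simp [hsg, hz]
            have hfl : (univ.filter fun i => (if i = z then !(sg i) else sg i) = true)
                = insert z (univ.filter fun i => sg i = true) := by
              ext i
              by_cases hiz : i = z
              · subst hiz
                simp [hsz]
              · simp [hiz]
            rw [hfl, Finset.card_insert_of_notMem (by simp [hsz])]
            intro hcon
            rcases hodd with ⟨k, hk⟩
            rcases hcon with ⟨k2, hk2⟩
            omega
          · intro i
            by_cases hiz : i = z
            · subst hiz
              rw [hz]
              simp
            · have hrw : (fun i => if i = z then !(sg i) else sg i) i = sg i := by
                simp [hiz]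
              rw [hrw]
              exact hsgm i
        · exact absurd hodd hodd'
      · exact ⟨sg, hodd, hsgm⟩
    obtain ⟨ε, hεpar, hεm⟩ := hε
    have h := hmemF _ (mem_vIII m hεpar)
    rw [inner_vIII] at h
    have hterm : ∀ i ∈ univ, x i * ((if ε i then (-1:ℝ) else 1) * (if i = m then 3/4 else 1/4))
        = |x i| * ((1:ℝ)/4) + (if i = m then |x i| * (1/2) else 0) := by
      intro i _
      rw [← hεm i]
      by_cases him : i = m
      · rw [if_pos him, if_pos him]; ring
      · rw [if_neg him, if_neg him]; ring
    rw [Finset.sum_congr rfl hterm, Finset.sum_add_distrib, ← Finset.sum_mul] at h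
    rw [show (∑ i, if i = m then |x i| * (1/2) else 0) = |x m| * (1/2) from by
      rw [Finset.sum_ite_eq' univ m (fun i => |x i| * (1/2))]; simp] at h
    exact hD _ h
  -- partition
  set A : Finset (Fin 8) := univ.filter (fun i => |x i| = β) with hA
  set B : Finset (Fin 8) := univ.filter (fun i => |x i| = α) with hB
  set C : Finset (Fin 8) := univ.filter (fun i => x i = 0) with hC
  have hmemA : ∀ i ∈ A, |x i| = β := fun i hi => (Finset.mem_filter.mp hi).2
  have hmemB : ∀ i ∈ B, |x i| = α := fun i hi => (Finset.mem_filter.mp hi).2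
  have hmemC : ∀ i ∈ C, x i = 0 := fun i hi => (Finset.mem_filter.mp hi).2
  have htriA : ∀ i, i ∈ A ∨ i ∈ B ∨ i ∈ C := by
    intro i
    rcases htri i with h | h | h
    · exact Or.inr (Or.inr (Finset.mem_filter.mpr ⟨Finset.mem_univ _, h⟩))
    · exact Or.inr (Or.inl (Finset.mem_filter.mpr ⟨Finset.mem_univ _, h⟩))
    · exact Or.inl (Finset.mem_filter.mpr ⟨Finset.mem_univ _, h⟩)
  have hdAB : Disjoint A B := by
    rw [Finset.disjoint_left]
    intro i hiA hiB
    have := hmemA i hiA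
    have := hmemB i hiB
    exact absurd (hαβ) (by rw [← this, ‹|x i| = β›]; exact lt_irrefl _)
  have hdAC : Disjoint A C := by
    rw [Finset.disjoint_left]
    intro i hiA hiC
    have h1 := hmemA i hiA
    have h2 := hmemC i hiC
    rw [h2] at h1
    simp at h1
    linarith
  have hdBC : Disjoint B C := by
    rw [Finset.disjoint_left]
    intro i hiB hiC
    have h1 := hmemB i hiB
    have h2 := hmemC i hiC
    rw [h2] at h1
    simp at h1
    linarith
  have huniv : (A ∪ B) ∪ C = univ := by
    apply Finset.eq_univ_iff_forall.mpr
    intro i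
    simp only [Finset.mem_union]
    rcases htriA i with h | h | h
    · exact Or.inl (Or.inl h)
    · exact Or.inl (Or.inr h)
    · exact Or.inr h
  have hdABC : Disjoint (A ∪ B) C := Finset.disjoint_union_left.mpr ⟨hdAC, hdBC⟩
  have hsplit : ∀ f : Fin 8 → ℝ, ∑ i, f i = ∑ i ∈ A, f i + ∑ i ∈ B, f i + ∑ i ∈ C, f i := by
    intro f
    rw [← huniv, Finset.sum_union hdABC, Finset.sum_union hdAB]
  have hcards : A.card + B.card + C.card = 8 := by
    have := Finset.card_union_of_disjoint hdABC
    rw [huniv, Finset.card_union_of_disjoint hdAB] at this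
    simpa using this.symm
  -- norm equation
  have hnorm : ∑ i, (x i)^2 = 1 := by
    have hn1 : ‖x‖ = 1 := by simpa using hx
    have h2 := EuclideanSpace.norm_eq x
    rw [hn1] at h2
    have h3 : Real.sqrt (∑ i, ‖x i‖^2) = 1 := h2.symm
    have h4 := Real.sqrt_eq_one.mp h3
    simpa [Real.norm_eq_abs, sq_abs] using h4
  have hkey : (A.card : ℝ) * β^2 + (B.card : ℝ) * α^2 = 1 := by
    rw [← hnorm, hsplit (fun i => (x i)^2)]
    rw [Finset.sum_congr rfl (fun i hi => by rw [← sq_abs, hmemA i hi] : ∀ i ∈ A, (x i)^2 = β^2)]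
    rw [Finset.sum_congr rfl (fun i hi => by rw [← sq_abs, hmemB i hi] : ∀ i ∈ B, (x i)^2 = α^2)]
    rw [Finset.sum_congr rfl (fun i hi => by rw [hmemC i hi]; ring : ∀ i ∈ C, (x i)^2 = 0)]
    rw [Finset.sum_const, Finset.sum_const, Finset.sum_const, nsmul_eq_mul, nsmul_eq_mul]
    simp
  have habssum : ∑ i, |x i| = (A.card : ℝ) * β + (B.card : ℝ) * α := by
    rw [hsplit (fun i => |x i|)]
    rw [Finset.sum_congr rfl hmemA, Finset.sum_congr rfl hmemB]
    rw [Finset.sum_congr rfl (fun i hi => by rw [hmemC i hi]; simp : ∀ i ∈ C, |x i| = 0)]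
    rw [Finset.sum_const, Finset.sum_const, Finset.sum_const, nsmul_eq_mul, nsmul_eq_mul]
    simp
  -- helper: construct membership in family 1
  have hmk1 : ∀ (s : Finset (Fin 8)), s.card = 2 → (∀ i ∈ s, |x i| = 1/Real.sqrt 2) →
      (∀ i, i ∉ s → x i = 0) → x ∈ e8Roots := by
    intro s hs2 hsv hz
    apply Finset.mem_union_left
    apply Finset.mem_image.mpr
    refine ⟨(s, sg), Finset.mem_filter.mpr ⟨Finset.mem_univ _, hs2⟩, ?_⟩
    ext i
    show (if i ∈ s then (if sg i then -(1/Real.sqrt 2) else 1/Real.sqrt 2) else 0) = x i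
    by_cases hi : i ∈ s
    · rw [if_pos hi]
      exact sign_reconstruct (hsv i hi)
    · rw [if_neg hi]
      exact (hz i hi).symm
  have hmk2 : (∀ i, |x i| = 1/(2*Real.sqrt 2)) →
      Even ((univ.filter fun i => sg i = true)).card → x ∈ e8Roots := by
    intro hv hev
    apply Finset.mem_union_right
    apply Finset.mem_image.mpr
    refine ⟨sg, Finset.mem_filter.mpr ⟨Finset.mem_univ _, hev⟩, ?_⟩
    ext i
    show (if sg i then -(1/(2*Real.sqrt 2)) else 1/(2*Real.sqrt 2)) = x i
    exact sign_reconstruct (hv i)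
  have hsq : Real.sqrt 2 * Real.sqrt 2 = 2 := Real.mul_self_sqrt (by norm_num)
  have hvalgen : ∀ γ c : ℝ, 0 < γ → 0 < c → γ^2 = c^2 → γ = c := by
    intro γ c hγ hc h
    have hprod : (γ - c) * (γ + c) = 0 := by linear_combination h
    rcases mul_eq_zero.mp hprod with h' | h'
    · linarith
    · linarith
  have hc2sq : (1/Real.sqrt 2)^2 = 1/2 := by
    rw [div_pow, one_pow, sq, hsq]
  have hc8sq : (1/(2*Real.sqrt 2))^2 = 1/8 := by
    rw [div_pow, one_pow, mul_pow, Real.sq_sqrt (by norm_num : (0:ℝ) ≤ 2)]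
    norm_num
  -- A.card ≤ 2
  have hA2 : A.card ≤ 2 := by
    by_contra hcon
    push_neg at hcon
    obtain ⟨i, hiA, j, hjA, k, hkA, hij, hik, hjk⟩ := Finset.two_lt_card.mp hcon
    have hc3 : ({i,j,k} : Finset (Fin 8)).card < 8 := by
      apply lt_of_le_of_lt _ (by norm_num : 3 < 8)
      apply le_trans (Finset.card_insert_le _ _)
      apply Nat.succ_le_succ
      apply le_trans (Finset.card_insert_le _ _)
      exact Nat.succ_le_succ (by simp)
    obtain ⟨l, hl⟩ := exists_outside hc3
    simp only [Finset.mem_insert, Finset.mem_singleton] at hl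
    push_neg at hl
    obtain ⟨hli, hlj, hlk⟩ := hl
    have hval := hcon4 i j k l hij hik (Ne.symm hli) hjk (Ne.symm hlj) (Ne.symm hlk)
    rw [hmemA i hiA, hmemA j hjA, hmemA k hkA] at hval
    have hlnn : 0 ≤ |x l| := abs_nonneg _
    rcases hval with h|h|h|h|h <;> linarith
  have hA012 : A.card = 0 ∨ A.card = 1 ∨ A.card = 2 := by omega
  rcases hA012 with hA0 | hA1 | hA2'
  · -- case A.card = 0
    have hAe : A = ∅ := Finset.card_eq_zero.mp hA0
    have hkeyB : (B.card:ℝ) * α^2 = 1 := by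
      rw [hA0] at hkey
      push_cast at hkey
      linarith
    have hB1 : 1 ≤ B.card := by
      by_contra hcl
      push_neg at hcl
      have hb0 : B.card = 0 := by omega
      rw [hb0] at hkeyB
      push_cast at hkeyB
      linarith
    have horB : B.card = 1 ∨ B.card = 2 ∨ B.card = 3 ∨ (4 ≤ B.card ∧ B.card ≤ 7)
        ∨ B.card = 8 := by omega
    -- a tool: 4 elements of B give β = 2α
    have hfour : 4 ≤ B.card → β = 2*α := by
      intro h4
      obtain ⟨b1,b2,b3,b4, hb1,hb2,hb3,hb4, h12,h13,h14,h23,h24,h34⟩ := exists_four h4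
      have hval := hcon4 b1 b2 b3 b4 h12 h13 h14 h23 h24 h34
      rw [hmemB b1 hb1, hmemB b2 hb2, hmemB b3 hb3, hmemB b4 hb4] at hval
      rcases hval with h|h|h|h|h <;> linarith
    rcases horB with h1 | h2 | h3 | h47 | h8
    · -- B.card = 1 : contradiction via α/2
      obtain ⟨jb, hjb⟩ := Finset.card_pos.mp (show 0 < B.card by omega)
      have hC7 : 2 < C.card := by omega
      obtain ⟨z1, hz1, z2, hz2, z3, hz3, h12, h13, h23⟩ := Finset.two_lt_card.mp hC7
      have hne1 : jb ≠ z1 := fun h => Finset.disjoint_left.mp hdBC hjb (h ▸ hz1)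
      have hne2 : jb ≠ z2 := fun h => Finset.disjoint_left.mp hdBC hjb (h ▸ hz2)
      have hne3 : jb ≠ z3 := fun h => Finset.disjoint_left.mp hdBC hjb (h ▸ hz3)
      have hval := hcon4 jb z1 z2 z3 hne1 hne2 hne3 h12 h13 h23
      rw [hmemB jb hjb, hmemC z1 hz1, hmemC z2 hz2, hmemC z3 hz3] at hval
      simp only [abs_zero] at hval
      rcases hval with h|h|h|h|h <;> linarith
    · -- B.card = 2 : member of family 1
      have hkey2 : 2*α^2 = 1 := by
        rw [h2] at hkeyB
        push_cast at hkeyB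
        linarith
      have hαv : α = 1/Real.sqrt 2 :=
        hvalgen α _ hα (by positivity) (by rw [hc2sq]; linarith)
      apply hmk1 B h2
      · intro i hi
        rw [hmemB i hi, hαv]
      · intro i hi
        rcases htriA i with h|h|h
        · rw [hAe] at h; simp at h
        · exact absurd h hi
        · exact hmemC i h
    · -- B.card = 3 : contradiction via 5α/4 and 3α/2
      have hCpos : 0 < C.card := by omega
      obtain ⟨z, hzC⟩ := Finset.card_pos.mp hCpos
      obtain ⟨b1, hb1, b2, hb2, b3, hb3, h12, h13, h23⟩ :=
        Finset.two_lt_card.mp (by omega : 2 < B.card)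
      have hT : ∑ i, |x i| = 3*α := by
        rw [habssum, hA0, h3]
        push_cast
        ring
      have hval3 := absIII (Or.inl ⟨z, hmemC z hzC⟩) b1
      rw [hT, hmemB b1 hb1] at hval3
      have hβv : β = (5/4)*α := by rcases hval3 with h|h|h|h|h <;> linarith
      have hne1 : b1 ≠ z := fun h => Finset.disjoint_left.mp hdBC hb1 (h ▸ hzC)
      have hne2 : b2 ≠ z := fun h => Finset.disjoint_left.mp hdBC hb2 (h ▸ hzC)
      have hne3 : b3 ≠ z := fun h => Finset.disjoint_left.mp hdBC hb3 (h ▸ hzC)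
      have hval := hcon4 b1 b2 b3 z h12 h13 hne1 h23 hne2 hne3
      rw [hmemB b1 hb1, hmemB b2 hb2, hmemB b3 hb3, hmemC z hzC] at hval
      simp only [abs_zero] at hval
      rcases hval with h|h|h|h|h <;> linarith
    · -- 4 ≤ B.card ≤ 7 : contradiction via 3α/2
      have hβ2α : β = 2*α := hfour h47.1
      have hCpos : 0 < C.card := by omega
      obtain ⟨z, hzC⟩ := Finset.card_pos.mp hCpos
      obtain ⟨b1, hb1, b2, hb2, b3, hb3, h12, h13, h23⟩ :=
        Finset.two_lt_card.mp (by omega : 2 < B.card)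
      have hne1 : b1 ≠ z := fun h => Finset.disjoint_left.mp hdBC hb1 (h ▸ hzC)
      have hne2 : b2 ≠ z := fun h => Finset.disjoint_left.mp hdBC hb2 (h ▸ hzC)
      have hne3 : b3 ≠ z := fun h => Finset.disjoint_left.mp hdBC hb3 (h ▸ hzC)
      have hval := hcon4 b1 b2 b3 z h12 h13 hne1 h23 hne2 hne3
      rw [hmemB b1 hb1, hmemB b2 hb2, hmemB b3 hb3, hmemC z hzC] at hval
      simp only [abs_zero] at hval
      rcases hval with h|h|h|h|h <;> linarith
    · -- B.card = 8
      have hBuniv : B = univ := Finset.eq_univ_of_card B (by rw [h8]; rfl)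
      have hkey8 : 8*α^2 = 1 := by
        rw [h8] at hkeyB
        push_cast at hkeyB
        linarith
      have hαv : α = 1/(2*Real.sqrt 2) :=
        hvalgen α _ hα (by positivity) (by rw [hc8sq]; linarith)
      have hβ2α : β = 2*α := hfour (by omega)
      by_cases hev : Even ((univ.filter fun i => sg i = true)).card
      · apply hmk2
        · intro i
          have hiB : i ∈ B := by rw [hBuniv]; exact Finset.mem_univ i
          rw [hmemB i hiB, hαv]
        · exact hev
      · have hT : ∑ i, |x i| = 8*α := by
          rw [habssum, hA0, h8]
          push_cast
          ring
        have hval3 := absIII (Or.inr hev) 0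
        have h0B : (0 : Fin 8) ∈ B := by rw [hBuniv]; exact Finset.mem_univ _
        rw [hT, hmemB 0 h0B] at hval3
        rcases hval3 with h|h|h|h|h <;> linarith
  · -- case A.card = 1 : always contradiction
    obtain ⟨ia, hia⟩ := Finset.card_pos.mp (show 0 < A.card by omega)
    by_cases hB0 : B.card = 0
    · have hC7 : 2 < C.card := by omega
      obtain ⟨z1, hz1, z2, hz2, z3, hz3, h12, h13, h23⟩ := Finset.two_lt_card.mp hC7
      have hne1 : ia ≠ z1 := fun h => Finset.disjoint_left.mp hdAC hia (h ▸ hz1)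
      have hne2 : ia ≠ z2 := fun h => Finset.disjoint_left.mp hdAC hia (h ▸ hz2)
      have hne3 : ia ≠ z3 := fun h => Finset.disjoint_left.mp hdAC hia (h ▸ hz3)
      have hval := hcon4 ia z1 z2 z3 hne1 hne2 hne3 h12 h13 h23
      rw [hmemA ia hia, hmemC z1 hz1, hmemC z2 hz2, hmemC z3 hz3] at hval
      simp only [abs_zero] at hval
      have hβ2α : β * (1/2) = α := by rcases hval with h|h|h|h|h <;> linarith
      have hT : ∑ i, |x i| = β := by
        rw [habssum, hA1, hB0]
        push_cast
        ring
      have hval3 := absIII (Or.inl ⟨z1, hmemC z1 hz1⟩) ia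
      rw [hT, hmemA ia hia] at hval3
      rcases hval3 with h|h|h|h|h <;> linarith
    · by_cases hC2 : 2 ≤ C.card
      · obtain ⟨jb, hjb⟩ := Finset.card_pos.mp (show 0 < B.card by omega)
        obtain ⟨z1, hz1, z2, hz2, h12⟩ := Finset.one_lt_card.mp (by omega : 1 < C.card)
        have hne0 : ia ≠ jb := fun h => Finset.disjoint_left.mp hdAB hia (h ▸ hjb)
        have hne1 : ia ≠ z1 := fun h => Finset.disjoint_left.mp hdAC hia (h ▸ hz1)
        have hne2 : ia ≠ z2 := fun h => Finset.disjoint_left.mp hdAC hia (h ▸ hz2)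
        have hne3 : jb ≠ z1 := fun h => Finset.disjoint_left.mp hdBC hjb (h ▸ hz1)
        have hne4 : jb ≠ z2 := fun h => Finset.disjoint_left.mp hdBC hjb (h ▸ hz2)
        have hval := hcon4 ia jb z1 z2 hne0 hne1 hne2 hne3 hne4 h12
        rw [hmemA ia hia, hmemB jb hjb, hmemC z1 hz1, hmemC z2 hz2] at hval
        simp only [abs_zero] at hval
        rcases hval with h|h|h|h|h <;> linarith
      · have hB4 : 4 ≤ B.card := by omega
        obtain ⟨b1,b2,b3,b4, hb1,hb2,hb3,hb4, h12,h13,h14,h23,h24,h34⟩ := exists_four hB4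
        have hval := hcon4 b1 b2 b3 b4 h12 h13 h14 h23 h24 h34
        rw [hmemB b1 hb1, hmemB b2 hb2, hmemB b3 hb3, hmemB b4 hb4] at hval
        have hβ2α : β = 2*α := by rcases hval with h|h|h|h|h <;> linarith
        have hne1 : ia ≠ b1 := fun h => Finset.disjoint_left.mp hdAB hia (h ▸ hb1)
        have hne2 : ia ≠ b2 := fun h => Finset.disjoint_left.mp hdAB hia (h ▸ hb2)
        have hne3 : ia ≠ b3 := fun h => Finset.disjoint_left.mp hdAB hia (h ▸ hb3)
        have hval2 := hcon4 ia b1 b2 b3 hne1 hne2 hne3 h12 h13 h23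
        rw [hmemA ia hia, hmemB b1 hb1, hmemB b2 hb2, hmemB b3 hb3] at hval2
        rcases hval2 with h|h|h|h|h <;> linarith
  · -- case A.card = 2 : member of family 1
    have hB0 : B.card = 0 := by
      by_contra hBne
      obtain ⟨kb, hkb⟩ := Finset.card_pos.mp (Nat.pos_of_ne_zero hBne)
      obtain ⟨i, hiA, j, hjA, hij⟩ := Finset.one_lt_card.mp (by omega : 1 < A.card)
      have hki : i ≠ kb := fun h => Finset.disjoint_left.mp hdAB hiA (h ▸ hkb)
      have hkj : j ≠ kb := fun h => Finset.disjoint_left.mp hdAB hjA (h ▸ hkb)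
      have hc3 : ({i,j,kb} : Finset (Fin 8)).card < 8 := by
        apply lt_of_le_of_lt _ (by norm_num : 3 < 8)
        apply le_trans (Finset.card_insert_le _ _)
        apply Nat.succ_le_succ
        apply le_trans (Finset.card_insert_le _ _)
        exact Nat.succ_le_succ (by simp)
      obtain ⟨l, hl⟩ := exists_outside hc3
      simp only [Finset.mem_insert, Finset.mem_singleton] at hl
      push_neg at hl
      obtain ⟨hli, hlj, hlk⟩ := hl
      have hval := hcon4 i j kb l hij hki (Ne.symm hli) hkj (Ne.symm hlj) (Ne.symm hlk)
      rw [hmemA i hiA, hmemA j hjA, hmemB kb hkb] at hval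
      have hlnn : 0 ≤ |x l| := abs_nonneg _
      rcases hval with h|h|h|h|h <;> linarith
    have hkey2 : 2*β^2 = 1 := by
      rw [hA2', hB0] at hkey
      push_cast at hkey
      linarith
    have hβv : β = 1/Real.sqrt 2 :=
      hvalgen β _ hβ (by positivity) (by rw [hc2sq]; linarith)
    apply hmk1 A hA2'
    · intro i hi
      rw [hmemA i hi, hβv]
    · intro i hi
      rcases htriA i with h|h|h
      · exact absurd h hi
      · rw [Finset.card_eq_zero.mp hB0] at h
        simp at h
      · exact hmemC i h

end Aux5
set_option maxRecDepth 16000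
set_option maxHeartbeats 1000000

/-- Lemma 4.1 (second part): a point of `S^7` forms exactly five distinct dot products with the
`2_41` polytope iff it belongs to the normalized `E_8` root system; for such a point the dot
products are `0, ±1/(2√2), ±1/√2`. -/
theorem poly241_exactly_five_dot_products :
    (∀ x ∈ sphere (0 : E 8) 1,
      (((fun y => ⟪x, y⟫) '' (↑poly241 : Set (E 8))).ncard = 5 ↔ x ∈ e8Roots)) ∧
    ∀ x ∈ e8Roots, (fun y => ⟪x, y⟫) '' (↑poly241 : Set (E 8)) =
      ({0, 1 / (2 * Real.sqrt 2), -(1 / (2 * Real.sqrt 2)),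
        1 / Real.sqrt 2, -(1 / Real.sqrt 2)} : Set ℝ) := by
  constructor
  · intro x hx
    constructor
    · exact forward_dir x hx
    · intro hx8
      rw [part2_main x hx8]
      rw [show (1 / Real.sqrt 2 : ℝ) = 2 * (1/(2*Real.sqrt 2)) from by ring]
      exact ncard_five (by positivity)
  · exact part2_main
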